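/- Let k be a field and S = k[x_1,x_2,x_3,y_1,y_2,y_3]. Define S-linear maps φ_1 : S^2 → S^3 by φ_1(f, g) = (y_2 f + x_2 g, y_1 f + x_1 g, y_3 f + x_3 g), and φ_0 : S^3 → S by φ_0(h_1, h_2, h_3) = h_1 (y_1 x_3 − x_1 y_3) + h_2 (x_2 y_3 − x_3 y_2) + h_3 (x_1 y_2 − x_2 y_1). Then: (i) φ_1 is injective; (ii) the kernel of φ_0 equals the image of φ_1; and (iii) the image of φ_0 equals the ideal ⟨ x_1 y_2 − x_2 y_1, x_2 y_3 − x_3 y_2, x_1 y_3 − x_3 y_1 ⟩. In particular, 0 → S^2 → S^3 → S → S/⟨2×2 minors of [[x_1,x_2,x_3],[y_1,y_2,y_3]]⟩ → 0 is exact. -/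

import Mathlib

open MvPolynomial

noncomputable section

variable (k : Type*) [Field k]

/-- `S = k[x₁,x₂,x₃,y₁,y₂,y₃]`, with `x_i = X 0, X 1, X 2` and `y_i = X 3, X 4, X 5`. -/
abbrev BeilinsonP2Ring := MvPolynomial (Fin 6) k

local notation "x₁" => (X 0 : BeilinsonP2Ring k)
local notation "x₂" => (X 1 : BeilinsonP2Ring k)
local notation "x₃" => (X 2 : BeilinsonP2Ring k)
local notation "y₁" => (X 3 : BeilinsonP2Ring k)
local notation "y₂" => (X 4 : BeilinsonP2Ring k)
local notation "y₃" => (X 5 : BeilinsonP2Ring k)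

/-- `φ₁ : S² → S³`, `φ₁(f, g) = (y₂ f + x₂ g, y₁ f + x₁ g, y₃ f + x₃ g)`. -/
def phiOne : (Fin 2 → BeilinsonP2Ring k) →ₗ[BeilinsonP2Ring k] (Fin 3 → BeilinsonP2Ring k) :=
  Matrix.mulVecLin !![y₂, x₂; y₁, x₁; y₃, x₃]

/-- `φ₀ : S³ → S`,
`φ₀(h₁,h₂,h₃) = h₁ (y₁x₃ − x₁y₃) + h₂ (x₂y₃ − x₃y₂) + h₃ (x₁y₂ − x₂y₁)`. -/
def phiZero : (Fin 3 → BeilinsonP2Ring k) →ₗ[BeilinsonP2Ring k] BeilinsonP2Ring k where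
  toFun h := h 0 * (y₁ * x₃ - x₁ * y₃) + h 1 * (x₂ * y₃ - x₃ * y₂) + h 2 * (x₁ * y₂ - x₂ * y₁)
  map_add' h h' := by simp only [Pi.add_apply]; ring
  map_smul' c h := by simp only [Pi.smul_apply, smul_eq_mul, RingHom.id_apply]; ring

/- ### Auxiliary lemmas -/

lemma BP2_primeX {σ : Type*} (i : σ) : Prime (X i : MvPolynomial σ k) := by
  classical
  haveI : Unique ({i} : Set σ) := Set.uniqueSingleton i
  have h1 : Prime (X (⟨i, rfl⟩ : ({i} : Set σ)) : MvPolynomial ({i} : Set σ) k) := by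
    let e : MvPolynomial ({i} : Set σ) k ≃ₐ[k] Polynomial k :=
      (renameEquiv k (Equiv.equivPUnit.{_,1} _)).trans (pUnitAlgEquiv.{_,0} k)
    rw [← MulEquiv.prime_iff e.toMulEquiv]
    have he : e (X (⟨i, rfl⟩ : ({i} : Set σ))) = Polynomial.X := by
      simp [e, renameEquiv_apply]
    rw [show e.toMulEquiv (X (⟨i, rfl⟩ : ({i} : Set σ)))
        = e (X (⟨i, rfl⟩ : ({i} : Set σ))) from rfl, he]
    exact Polynomial.prime_X
  have h2 := (prime_rename_iff ({i} : Set σ) (p := X ⟨i, rfl⟩)).mpr h1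
  simpa using h2

lemma BP2_x_not_dvd (i j : Fin 5) (hij : i ≠ j) : ¬ (X i : MvPolynomial (Fin 5) k) ∣ X j := by
  rintro ⟨t, ht⟩
  have := congrArg (eval (fun m => if m = i then (0 : k) else 1)) ht
  simp [hij] at this
  exact hij this.symm

/-- `x₂ y₁ - x₁ y₂` is prime in `S`. -/
lemma BP2_primeD : Prime (X 1 * X 3 - X 0 * X 4 : BeilinsonP2Ring k) := by
  rw [← MulEquiv.prime_iff (finSuccEquiv k 5).toMulEquiv]
  have heq : (finSuccEquiv k 5).toMulEquiv (X 1 * X 3 - X 0 * X 4 : MvPolynomial (Fin 6) k)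
      = Polynomial.C (X 0 * X 2) - Polynomial.X * Polynomial.C (X 3) := by
    show (finSuccEquiv k 5) (X 1 * X 3 - X 0 * X 4 : MvPolynomial (Fin 6) k) = _
    simp only [map_sub, map_mul, finSuccEquiv_X_zero,
      show (X 1 : MvPolynomial (Fin 6) k) = X (Fin.succ 0) from rfl,
      show (X 3 : MvPolynomial (Fin 6) k) = X (Fin.succ 2) from rfl,
      show (X 4 : MvPolynomial (Fin 6) k) = X (Fin.succ 3) from rfl,
      finSuccEquiv_X_succ, map_mul]
  rw [heq, ← UniqueFactorizationMonoid.irreducible_iff_prime]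
  set q : Polynomial (MvPolynomial (Fin 5) k) :=
    Polynomial.C (X 0 * X 2) - Polynomial.X * Polynomial.C (X 3) with hqdef
  have hb : (X 3 : MvPolynomial (Fin 5) k) ≠ 0 := X_ne_zero _
  have hq' : q = Polynomial.C (-(X 3)) * Polynomial.X + Polynomial.C (X 0 * X 2) := by
    rw [map_neg]; ring
  have hdeg : q.natDegree = 1 := by
    rw [hq', Polynomial.natDegree_linear (neg_ne_zero.mpr hb)]
  have hq0 : q ≠ 0 := fun h => by simp [h] at hdeg
  have claim : ∀ c : MvPolynomial (Fin 5) k, Polynomial.C c ∣ q → IsUnit c := by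
    intro c ⟨t, ht⟩
    have hc1 : c ∣ X 3 := by
      have := congrArg (fun p => Polynomial.coeff p 1) ht
      simp [hqdef] at this
      exact dvd_neg.mp ⟨t.coeff 1, this⟩
    have hc0 : c ∣ X 0 * X 2 := by
      have := congrArg (fun p => Polynomial.coeff p 0) ht
      simp [hqdef] at this
      exact ⟨t.coeff 0, this⟩
    obtain ⟨d, hd⟩ := hc1
    rcases (BP2_primeX k (3 : Fin 5)).irreducible.isUnit_or_isUnit hd with h | h
    · exact h
    · exfalso
      obtain ⟨u, rfl⟩ := h
      have hx3c : (X 3 : MvPolynomial (Fin 5) k) ∣ c := ⟨(↑u⁻¹ : MvPolynomial (Fin 5) k), by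
        rw [hd, mul_assoc]; simp⟩
      rcases (BP2_primeX k (3 : Fin 5)).2.2 _ _ (hx3c.trans hc0) with h3 | h3
      · exact BP2_x_not_dvd k 3 0 (by decide) h3
      · exact BP2_x_not_dvd k 3 2 (by decide) h3
  constructor
  · exact Polynomial.not_isUnit_of_natDegree_pos q (hdeg ▸ one_pos)
  · intro f g hfg
    have hf0 : f ≠ 0 := fun h => hq0 (by rw [hfg, h, zero_mul])
    have hg0 : g ≠ 0 := fun h => hq0 (by rw [hfg, h, mul_zero])
    have hsum : f.natDegree + g.natDegree = 1 := by
      rw [← Polynomial.natDegree_mul hf0 hg0, ← hfg, hdeg]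
    have : f.natDegree = 0 ∨ g.natDegree = 0 := by omega
    rcases this with h | h
    · left
      obtain ⟨c, hc⟩ := Polynomial.natDegree_eq_zero.mp h
      rw [← hc]
      exact Polynomial.isUnit_C.mpr (claim c ⟨g, by rw [hfg, ← hc]⟩)
    · right
      obtain ⟨c, hc⟩ := Polynomial.natDegree_eq_zero.mp h
      rw [← hc]
      exact Polynomial.isUnit_C.mpr (claim c ⟨f, by rw [hfg, ← hc]; ring⟩)

/-- substitution killing `X 0` and `X 3` (i.e. `x₁ ↦ 0`, `y₁ ↦ 0`). -/
def BP2sub : BeilinsonP2Ring k →ₐ[k] BeilinsonP2Ring k :=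
  aeval (fun m => if m = 0 then 0 else if m = 3 then 0 else X m)

@[simp] lemma BP2sub_X0 : BP2sub k (X 0) = 0 := by simp [BP2sub]
@[simp] lemma BP2sub_X3 : BP2sub k (X 3) = 0 := by simp [BP2sub]
@[simp] lemma BP2sub_X1 : BP2sub k (X 1) = X 1 := by simp [BP2sub]
@[simp] lemma BP2sub_X2 : BP2sub k (X 2) = X 2 := by simp [BP2sub]
@[simp] lemma BP2sub_X4 : BP2sub k (X 4) = X 4 := by simp [BP2sub]
@[simp] lemma BP2sub_X5 : BP2sub k (X 5) = X 5 := by simp [BP2sub]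

lemma BP2sub_idem (f : BeilinsonP2Ring k) : BP2sub k (BP2sub k f) = BP2sub k f := by
  have h : (BP2sub k).comp (BP2sub k) = BP2sub k := by
    apply MvPolynomial.algHom_ext
    intro m
    fin_cases m <;> simp
  exact AlgHom.congr_fun h f

lemma BP2_decomp (f : BeilinsonP2Ring k) :
    ∃ p q, f = X 0 * p + X 3 * q + BP2sub k f := by
  induction f using MvPolynomial.induction_on with
  | C a => exact ⟨0, 0, by simp [BP2sub]⟩
  | add f g hf hg =>
      obtain ⟨p1, q1, h1⟩ := hf
      obtain ⟨p2, q2, h2⟩ := hg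
      exact ⟨p1 + p2, q1 + q2, by rw [map_add]; linear_combination h1 + h2⟩
  | mul_X f i hf =>
      obtain ⟨p, q, hfe⟩ := hf
      by_cases h0 : i = 0
      · subst h0
        exact ⟨f, 0, by rw [map_mul, BP2sub_X0, mul_zero]; ring⟩
      · by_cases h3 : i = 3
        · subst h3
          exact ⟨0, f, by rw [map_mul, BP2sub_X3, mul_zero]; ring⟩
        · refine ⟨p * X i, q * X i, ?_⟩
          have hxi : BP2sub k (X i) = X i := by
            fin_cases i <;> simp_all
          rw [map_mul, hxi]
          linear_combination X i * hfe

/-- The complex `0 → S² → S³ → S → S/J_L → 0` from the cellular resolution of the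
diagonal of `ℙ²` is exact: `φ₁` is injective, `ker φ₀ = im φ₁`, and the image of
`φ₀` is the ideal of 2×2 minors of `[[x₁,x₂,x₃],[y₁,y₂,y₃]]`. -/
theorem beilinson_P2_cellular_resolution_exact :
    Function.Injective (phiOne k)
      ∧ LinearMap.ker (phiZero k) = LinearMap.range (phiOne k)
      ∧ LinearMap.range (phiZero k)
          = Ideal.span {x₁ * y₂ - x₂ * y₁, x₂ * y₃ - x₃ * y₂, x₁ * y₃ - x₃ * y₁} := by
  have hD : Prime (x₂ * y₁ - x₁ * y₂) := BP2_primeD k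
  have hDne : (x₂ * y₁ - x₁ * y₂) ≠ 0 := hD.ne_zero
  have hΔ₂ : (x₂ * y₃ - x₃ * y₂) ≠ 0 := by
    intro h
    have := congrArg (eval (fun m : Fin 6 => if m = 1 ∨ m = 5 then (1 : k) else 0)) h
    simp at this
  have hDE : ¬ (x₂ * y₁ - x₁ * y₂) ∣ (x₃ * y₁ - x₁ * y₃) := by
    rintro ⟨t, ht⟩
    have := congrArg (eval (fun m : Fin 6 => if m = 2 ∨ m = 3 then (1 : k) else 0)) ht
    simp at this
  have hφ10 : ∀ v : Fin 2 → BeilinsonP2Ring k, phiOne k v 0 = y₂ * v 0 + x₂ * v 1 := by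
    intro v
    simp [phiOne, Matrix.mulVecLin_apply, Matrix.mulVec, dotProduct, Fin.sum_univ_two, Matrix.vecHead, Matrix.vecTail]
  have hφ11 : ∀ v : Fin 2 → BeilinsonP2Ring k, phiOne k v 1 = y₁ * v 0 + x₁ * v 1 := by
    intro v
    simp [phiOne, Matrix.mulVecLin_apply, Matrix.mulVec, dotProduct, Fin.sum_univ_two, Matrix.vecHead, Matrix.vecTail]
  have hφ12 : ∀ v : Fin 2 → BeilinsonP2Ring k, phiOne k v 2 = y₃ * v 0 + x₃ * v 1 := by
    intro v
    simp [phiOne, Matrix.mulVecLin_apply, Matrix.mulVec, dotProduct, Fin.sum_univ_two, Matrix.vecHead, Matrix.vecTail]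
  refine ⟨?_, ?_, ?_⟩
  · -- injectivity
    rw [← LinearMap.ker_eq_bot, LinearMap.ker_eq_bot']
    intro v hv
    have e0 : y₂ * v 0 + x₂ * v 1 = 0 := by rw [← hφ10, hv]; rfl
    have e1 : y₁ * v 0 + x₁ * v 1 = 0 := by rw [← hφ11, hv]; rfl
    have h0 : (x₂ * y₁ - x₁ * y₂) * v 0 = 0 := by linear_combination x₂ * e1 - x₁ * e0
    have hv0 : v 0 = 0 := by
      rcases mul_eq_zero.mp h0 with h | h
      · exact absurd h hDne
      · exact h
    have h1 : (x₁ : BeilinsonP2Ring k) * v 1 = 0 := by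
      rw [hv0] at e1; linear_combination e1
    have hv1 : v 1 = 0 := by
      rcases mul_eq_zero.mp h1 with h | h
      · exact absurd h (X_ne_zero _)
      · exact h
    funext i
    fin_cases i
    · exact hv0
    · exact hv1
  · -- ker = range
    apply le_antisymm
    · intro h hh
      rw [LinearMap.mem_ker] at hh
      have hh' : h 0 * (y₁ * x₃ - x₁ * y₃) + h 1 * (x₂ * y₃ - x₃ * y₂)
          + h 2 * (x₁ * y₂ - x₂ * y₁) = 0 := hh
      obtain ⟨p, q, hpq⟩ := BP2_decomp k (h 1)
      have key : (h 0 - (y₂ * q + x₂ * p)) * (y₁ * x₃ - x₁ * y₃)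
          + BP2sub k (h 1) * (x₂ * y₃ - x₃ * y₂)
          + (h 2 - (y₃ * q + x₃ * p)) * (x₁ * y₂ - x₂ * y₁) = 0 := by
        linear_combination hh' - (x₂ * y₃ - x₃ * y₂) * hpq
      have happ := congrArg (BP2sub k) key
      simp only [map_add, map_mul, map_sub, map_zero, BP2sub_X0, BP2sub_X1, BP2sub_X2,
        BP2sub_X3, BP2sub_X4, BP2sub_X5, BP2sub_idem] at happ
      have hr0 : BP2sub k (h 1) = 0 := by
        rcases mul_eq_zero.mp (show BP2sub k (h 1) * (x₂ * y₃ - x₃ * y₂) = 0 by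
          linear_combination happ) with h' | h'
        · exact h'
        · exact absurd h' hΔ₂
      have hdvd : (x₂ * y₁ - x₁ * y₂) ∣ (h 0 - (y₂ * q + x₂ * p)) := by
        have hmul : (x₂ * y₁ - x₁ * y₂) ∣ (h 0 - (y₂ * q + x₂ * p)) * (x₃ * y₁ - x₁ * y₃) :=
          ⟨h 2 - (y₃ * q + x₃ * p), by linear_combination key - (x₂ * y₃ - x₃ * y₂) * hr0⟩
        rcases hD.2.2 _ _ hmul with h' | h'
        · exact h'
        · exact absurd h' hDE
      obtain ⟨c, hc⟩ := hdvd
      have hc3 : h 2 - (y₃ * q + x₃ * p) = c * (x₃ * y₁ - x₁ * y₃) := by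
        apply mul_left_cancel₀ hDne
        linear_combination -key + (x₂ * y₃ - x₃ * y₂) * hr0 + (x₃ * y₁ - x₁ * y₃) * hc
      refine ⟨![q - c * x₁, p + c * y₁], ?_⟩
      have w0 : (![q - c * x₁, p + c * y₁] : Fin 2 → BeilinsonP2Ring k) 0 = q - c * x₁ := rfl
      have w1 : (![q - c * x₁, p + c * y₁] : Fin 2 → BeilinsonP2Ring k) 1 = p + c * y₁ := rfl
      funext i
      fin_cases i
      · show phiOne k ![q - c * x₁, p + c * y₁] 0 = h 0
        rw [hφ10, w0, w1]
        linear_combination -hc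
      · show phiOne k ![q - c * x₁, p + c * y₁] 1 = h 1
        rw [hφ11, w0, w1]
        linear_combination -hpq - hr0
      · show phiOne k ![q - c * x₁, p + c * y₁] 2 = h 2
        rw [hφ12, w0, w1]
        linear_combination -hc3
    · rintro _ ⟨v, rfl⟩
      rw [LinearMap.mem_ker]
      show phiOne k v 0 * (y₁ * x₃ - x₁ * y₃) + phiOne k v 1 * (x₂ * y₃ - x₃ * y₂)
        + phiOne k v 2 * (x₁ * y₂ - x₂ * y₁) = 0
      rw [hφ10, hφ11, hφ12]
      ring
  · -- range = span
    apply le_antisymm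
    · rintro _ ⟨h, rfl⟩
      show h 0 * (y₁ * x₃ - x₁ * y₃) + h 1 * (x₂ * y₃ - x₃ * y₂)
        + h 2 * (x₁ * y₂ - x₂ * y₁) ∈ _
      have m1 : (y₁ * x₃ - x₁ * y₃ : BeilinsonP2Ring k)
          ∈ Ideal.span {x₁ * y₂ - x₂ * y₁, x₂ * y₃ - x₃ * y₂, x₁ * y₃ - x₃ * y₁} := by
        have he : (y₁ * x₃ - x₁ * y₃ : BeilinsonP2Ring k) = -(x₁ * y₃ - x₃ * y₁) := by ring
        rw [he]
        exact neg_mem (Ideal.subset_span (by simp))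
      have m2 : (x₂ * y₃ - x₃ * y₂ : BeilinsonP2Ring k)
          ∈ Ideal.span {x₁ * y₂ - x₂ * y₁, x₂ * y₃ - x₃ * y₂, x₁ * y₃ - x₃ * y₁} :=
        Ideal.subset_span (by simp)
      have m3 : (x₁ * y₂ - x₂ * y₁ : BeilinsonP2Ring k)
          ∈ Ideal.span {x₁ * y₂ - x₂ * y₁, x₂ * y₃ - x₃ * y₂, x₁ * y₃ - x₃ * y₁} :=
        Ideal.subset_span (by simp)
      exact add_mem (add_mem (Ideal.mul_mem_left _ _ m1) (Ideal.mul_mem_left _ _ m2))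
        (Ideal.mul_mem_left _ _ m3)
    · rw [Ideal.span_le]
      rintro g hg
      simp only [Set.mem_insert_iff, Set.mem_singleton_iff] at hg
      rcases hg with rfl | rfl | rfl
      · refine ⟨![0, 0, 1], ?_⟩
        show (0 : BeilinsonP2Ring k) * (y₁ * x₃ - x₁ * y₃) + 0 * (x₂ * y₃ - x₃ * y₂)
          + 1 * (x₁ * y₂ - x₂ * y₁) = _
        ring
      · refine ⟨![0, 1, 0], ?_⟩
        show (0 : BeilinsonP2Ring k) * (y₁ * x₃ - x₁ * y₃) + 1 * (x₂ * y₃ - x₃ * y₂)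
          + 0 * (x₁ * y₂ - x₂ * y₁) = _
        ring
      · refine ⟨![-1, 0, 0], ?_⟩
        show (-1 : BeilinsonP2Ring k) * (y₁ * x₃ - x₁ * y₃) + 0 * (x₂ * y₃ - x₃ * y₂)
          + 0 * (x₁ * y₂ - x₂ * y₁) = _
        ring

end
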